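/- Let d be a positive squarefree integer with d ≡ 3 (mod 4), set ω_d = (1+i√d)/2 and O_d = ℤ + ℤ·ω_d. Let m, n ∈ ℤ, β = m + n·ω_d, and t ∈ ℝ. Then all entries of the Heisenberg translation matrix T(β,t) lie in O_d if and only if there exists s ∈ ℤ with t = s·√d and s ≡ m² + mn + n²(d+1)/4 (mod 2). In particular, for every β ∈ O_d there exists t ∈ ℝ such that T(β,t) has all entries in O_d (every translation of Isom(O_d) lifts to the stabiliser of q∞), and T(0,t) has all entries in O_d if and only if t ∈ 2√d·ℤ. -/

import Mathlib

noncomputable section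

open Complex

/-- The Heisenberg translation matrix `T(β,t)`, with rows
`(1, −conj β, (−|β|² + i t)/2)`, `(0, 1, β)`, `(0, 0, 1)`. -/
def Tmat (β : ℂ) (t : ℝ) : Matrix (Fin 3) (Fin 3) ℂ :=
  !![1, -((starRingEnd ℂ) β), ((-((‖β‖ ^ 2 : ℝ) : ℂ)) + Complex.I * (t : ℝ))/2;
     0, 1, β;
     0, 0, 1]

/-- `ω_d = (1 + i√d)/2`. -/
def ωd (d : ℕ) : ℂ := (1 + Complex.I * ((√(d : ℝ)) : ℝ)) / 2

/-- The ring `O_d = ℤ + ℤ·ω_d`, as a subset of `ℂ`. -/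
def Od (d : ℕ) : Set ℂ := {z | ∃ a b : ℤ, z = (a : ℂ) + (b : ℂ) * ωd d}

lemma mem_Od_iff (d : ℕ) (z : ℂ) :
    z ∈ Od d ↔ ∃ a b : ℤ, z.re = a + b/2 ∧ z.im = b * (√(d:ℝ)/2) := by
  constructor
  · rintro ⟨a, b, rfl⟩
    exact ⟨a, b, by simp [ωd]; ring, by simp [ωd]⟩
  · rintro ⟨a, b, h1, h2⟩
    refine ⟨a, b, ?_⟩
    apply Complex.ext
    · simp [ωd, h1]; ring
    · simp [ωd, h2]

lemma normSq_beta (d : ℕ) (hdmod : d % 4 = 3) (m n : ℤ) :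
    ((m ^ 2 + m * n + n ^ 2 * (((d : ℤ) + 1) / 4) : ℤ) : ℝ)
      = ‖(m : ℂ) + (n : ℂ) * ωd d‖ ^ 2 := by
  have he : 4 * (((d : ℤ) + 1) / 4) = (d : ℤ) + 1 := by omega
  rw [Complex.sq_norm, Complex.normSq_apply]
  have hre : ((m : ℂ) + (n : ℂ) * ωd d).re = (m : ℝ) + (n : ℝ) / 2 := by simp [ωd]; ring
  have him : ((m : ℂ) + (n : ℂ) * ωd d).im = (n : ℝ) * (√(d:ℝ) / 2) := by simp [ωd]
  have hsq : √(d:ℝ) * √(d:ℝ) = (d : ℝ) := Real.mul_self_sqrt (by positivity)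
  have he' : (4 : ℝ) * ((((d : ℤ) + 1) / 4 : ℤ) : ℝ) = (d : ℝ) + 1 := by
    exact_mod_cast congrArg (Int.cast : ℤ → ℝ) he
  rw [hre, him]
  push_cast
  nlinarith [hsq, he']

lemma conj_ωd (d : ℕ) : (starRingEnd ℂ) (ωd d) = 1 - ωd d := by
  unfold ωd
  rw [map_div₀, map_add, map_one, map_mul, Complex.conj_I, Complex.conj_ofReal, map_ofNat]
  ring

lemma entry_mem (d : ℕ) (hd0 : 0 < d) (N : ℤ) (t : ℝ) :
    ((-((((N : ℤ) : ℝ)) : ℂ) + Complex.I * (t : ℝ)) / 2 ∈ Od d) ↔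
      ∃ s : ℤ, t = (s : ℝ) * √(d : ℝ) ∧ s ≡ N [ZMOD 2] := by
  rw [mem_Od_iff]
  have hre : ((-((((N : ℤ) : ℝ)) : ℂ) + Complex.I * (t : ℝ)) / 2).re = -(N : ℝ) / 2 := by
    simp
  have him : ((-((((N : ℤ) : ℝ)) : ℂ) + Complex.I * (t : ℝ)) / 2).im = t / 2 := by
    simp
  rw [hre, him]
  constructor
  · rintro ⟨a, b, h1, h2⟩
    refine ⟨b, by linarith, ?_⟩
    rw [Int.modEq_iff_dvd]
    have : -(N : ℝ) = 2 * a + b := by linarith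
    have hz : -(N : ℤ) = 2 * a + b := by exact_mod_cast this
    exact ⟨-a - b, by linarith⟩
  · rintro ⟨s, rfl, hmod⟩
    rw [Int.modEq_iff_dvd] at hmod
    obtain ⟨c, hc⟩ := hmod
    refine ⟨-(c + s), s, ?_, by ring⟩
    have : (N : ℝ) = 2 * c + s := by exact_mod_cast (by linarith : N = 2 * c + s)
    push_cast
    linarith

/-- **Lifting of lattice translations, case `d ≡ 3 (mod 4)`** (part (ii) of the proof of
Proposition 3.1): for `β = m + n·ω_d`, the matrix `T(β,t)` has all its entries in `O_d`
iff `t = s√d` with `s ≡ m² + mn + n²(d+1)/4 (mod 2)`; in particular every translation of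
`Isom(O_d)` lifts, and the vertical translations that lift are exactly those with
`t ∈ 2√d·ℤ`. -/
theorem heisenberg_translation_lift_three_mod_four
    (d : ℕ) (hd0 : 0 < d) (hdsf : Squarefree d) (hdmod : d % 4 = 3) :
    (∀ (m n : ℤ) (t : ℝ),
      (∀ i j, Tmat ((m : ℂ) + (n : ℂ) * ωd d) t i j ∈ Od d) ↔
        ∃ s : ℤ, t = (s : ℝ) * √(d : ℝ) ∧
          s ≡ m ^ 2 + m * n + n ^ 2 * (((d : ℤ) + 1) / 4) [ZMOD 2]) ∧
    (∀ β ∈ Od d, ∃ t : ℝ, ∀ i j, Tmat β t i j ∈ Od d) ∧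
    (∀ t : ℝ, (∀ i j, Tmat 0 t i j ∈ Od d) ↔ ∃ k : ℤ, t = 2 * √(d : ℝ) * (k : ℝ)) := by
  have key : ∀ (m n : ℤ) (t : ℝ),
      (∀ i j, Tmat ((m : ℂ) + (n : ℂ) * ωd d) t i j ∈ Od d) ↔
        ∃ s : ℤ, t = (s : ℝ) * √(d : ℝ) ∧
          s ≡ m ^ 2 + m * n + n ^ 2 * (((d : ℤ) + 1) / 4) [ZMOD 2] := by
    intro m n t
    set N : ℤ := m ^ 2 + m * n + n ^ 2 * (((d : ℤ) + 1) / 4) with hN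
    have habs : ((‖(m : ℂ) + (n : ℂ) * ωd d‖ ^ 2 : ℝ) : ℂ) = (((N : ℝ)) : ℂ) := by
      rw [← normSq_beta d hdmod m n]
    constructor
    · intro h
      have h02 := h 0 2
      rw [show Tmat ((m : ℂ) + (n : ℂ) * ωd d) t 0 2 =
        (-((((N : ℤ) : ℝ)) : ℂ) + Complex.I * (t : ℝ)) / 2 by simp [Tmat, habs]] at h02
      exact (entry_mem d hd0 N t).mp h02
    · intro hs i j
      have h1 : (1 : ℂ) ∈ Od d := ⟨1, 0, by push_cast; ring⟩
      have hz : (0 : ℂ) ∈ Od d := ⟨0, 0, by push_cast; ring⟩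
      fin_cases i <;> fin_cases j
      · exact h1
      · refine ⟨-(m + n), n, ?_⟩
        show -((starRingEnd ℂ) ((m : ℂ) + (n : ℂ) * ωd d)) = _
        rw [map_add, map_mul, conj_ωd]
        simp only [map_intCast]
        push_cast
        ring
      · show (-((‖(m : ℂ) + (n : ℂ) * ωd d‖ ^ 2 : ℝ) : ℂ)
            + Complex.I * (t : ℝ)) / 2 ∈ Od d
        rw [show (-((‖(m : ℂ) + (n : ℂ) * ωd d‖ ^ 2 : ℝ) : ℂ) + Complex.I * (t : ℝ)) / 2
          = (-((((N : ℤ) : ℝ)) : ℂ) + Complex.I * (t : ℝ)) / 2 by rw [habs]]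
        exact (entry_mem d hd0 N t).mpr hs
      · exact hz
      · exact h1
      · exact ⟨m, n, rfl⟩
      · exact hz
      · exact hz
      · exact h1
  refine ⟨key, ?_, ?_⟩
  · rintro β ⟨a, b, rfl⟩
    refine ⟨((a ^ 2 + a * b + b ^ 2 * (((d : ℤ) + 1) / 4) : ℤ) : ℝ) * √(d : ℝ), ?_⟩
    exact (key a b _).mpr ⟨_, rfl, Int.ModEq.refl _⟩
  · intro t
    have h0 : (0 : ℂ) = ((0 : ℤ) : ℂ) + ((0 : ℤ) : ℂ) * ωd d := by norm_num
    rw [h0, key 0 0 t]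
    constructor
    · rintro ⟨s, rfl, hmod⟩
      rw [Int.modEq_iff_dvd] at hmod
      obtain ⟨c, hc⟩ := hmod
      refine ⟨-c, ?_⟩
      have : s = 2 * (-c) := by linarith [hc]
      rw [this]
      push_cast
      ring
    · rintro ⟨k, rfl⟩
      refine ⟨2 * k, by push_cast; ring, ?_⟩
      rw [Int.modEq_iff_dvd]
      exact ⟨-k, by ring⟩

end
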